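/- For every natural number n, Q_n(t,q) = ∑_{p ∈ P'_n} t^{fh(p)}·q^{w(p)} and R_n(t,q) = ∑_{p ∈ P_n} t^{fh(p)}·q^{w(p)}, as identities of polynomials in t and q. -/

import Mathlib

open Polynomial

noncomputable def qnat (m : ℕ) : Polynomial ℤ := ∑ i ∈ Finset.range m, X ^ i

noncomputable def qD (p : Polynomial (Polynomial ℤ)) : Polynomial (Polynomial ℤ) :=
  p.sum fun m c => C (c * qnat m) * X ^ (m - 1)

noncomputable def opU (p : Polynomial (Polynomial ℤ)) : Polynomial (Polynomial ℤ) := X * p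

noncomputable def qPolyQ : ℕ → Polynomial (Polynomial ℤ)
  | 0 => 1
  | n + 1 => (1 + C (X : Polynomial ℤ) * X ^ 2) * qD (qPolyQ n) + X * qPolyQ n

noncomputable def qPolyR : ℕ → Polynomial (Polynomial ℤ)
  | 0 => 1
  | n + 1 => (1 + C ((X : Polynomial ℤ) ^ 2) * X ^ 2) * qD (qPolyR n)
      + (1 + C (X : Polynomial ℤ)) * X * qPolyR n

def dpValid : List (Bool × ℕ) → ℕ → Prop
  | [], _ => True
  | (true, l) :: rest, h => l ≤ h + 1 ∧ dpValid rest (h + 1)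
  | (false, l) :: rest, h => 1 ≤ h ∧ l + 1 ≤ h ∧ dpValid rest (h - 1)

def dpValid' : List (Bool × ℕ) → ℕ → Prop
  | [], _ => True
  | (true, l) :: rest, h => l ≤ h ∧ dpValid' rest (h + 1)
  | (false, l) :: rest, h => 1 ≤ h ∧ l + 1 ≤ h ∧ dpValid' rest (h - 1)

def finalHeight : List (Bool × ℕ) → ℕ → ℕ
  | [], h => h
  | (true, _) :: rest, h => finalHeight rest (h + 1)
  | (false, _) :: rest, h => finalHeight rest (h - 1)

/-! ### Auxiliary development -/

def gValid (b : ℕ) : List (Bool × ℕ) → ℕ → Prop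
  | [], _ => True
  | (true, l) :: rest, h => l ≤ h + b ∧ gValid b rest (h + 1)
  | (false, l) :: rest, h => 1 ≤ h ∧ l + 1 ≤ h ∧ gValid b rest (h - 1)

lemma gValid_zero (p : List (Bool × ℕ)) (h : ℕ) : gValid 0 p h ↔ dpValid' p h := by
  induction p generalizing h with
  | nil => simp [gValid, dpValid']
  | cons s rest ih =>
    obtain ⟨(_|_), l⟩ := s <;> simp [gValid, dpValid', ih]

lemma gValid_one (p : List (Bool × ℕ)) (h : ℕ) : gValid 1 p h ↔ dpValid p h := by
  induction p generalizing h with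
  | nil => simp [gValid, dpValid]
  | cons s rest ih =>
    obtain ⟨(_|_), l⟩ := s <;> simp [gValid, dpValid, ih]

lemma finalHeight_append (p q : List (Bool × ℕ)) (h : ℕ) :
    finalHeight (p ++ q) h = finalHeight q (finalHeight p h) := by
  induction p generalizing h with
  | nil => rfl
  | cons s rest ih => obtain ⟨(_|_), l⟩ := s <;> simp [finalHeight, ih]

lemma gValid_append (b : ℕ) (p q : List (Bool × ℕ)) (h : ℕ) :
    gValid b (p ++ q) h ↔ gValid b p h ∧ gValid b q (finalHeight p h) := by
  induction p generalizing h with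
  | nil => simp [gValid, finalHeight]
  | cons s rest ih =>
    obtain ⟨(_|_), l⟩ := s <;> simp [gValid, finalHeight, ih] <;> tauto

def extF (b h : ℕ) : Finset (Bool × ℕ) :=
  ((Finset.range (h + b + 1)).image fun l => (true, l)) ∪
    ((Finset.range h).image fun l => (false, l))

lemma mem_extF {b h : ℕ} {s : Bool × ℕ} :
    s ∈ extF b h ↔ (s.1 = true ∧ s.2 < h + b + 1) ∨ (s.1 = false ∧ s.2 < h) := by
  obtain ⟨(_|_), l⟩ := s <;> simp [extF]

lemma single_mem {b h : ℕ} {s : Bool × ℕ} (hv : gValid b [s] h) : s ∈ extF b h := by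
  obtain ⟨bb, l⟩ := s
  cases bb with
  | true =>
    obtain ⟨h1, -⟩ := hv
    exact mem_extF.mpr (Or.inl ⟨rfl, by omega⟩)
  | false =>
    obtain ⟨h1, h2, -⟩ := hv
    exact mem_extF.mpr (Or.inr ⟨rfl, by omega⟩)

def PF (b : ℕ) : ℕ → Finset (List (Bool × ℕ))
  | 0 => {[]}
  | n + 1 => (PF b n).biUnion fun p => (extF b (finalHeight p 0)).image fun s => p ++ [s]

lemma mem_PF (b : ℕ) : ∀ n (p : List (Bool × ℕ)),
    p ∈ PF b n ↔ p.length = n ∧ gValid b p 0 := by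
  intro n
  induction n with
  | zero =>
    intro p
    simp only [PF, Finset.mem_singleton]
    constructor
    · rintro rfl; exact ⟨rfl, trivial⟩
    · rintro ⟨hl, _⟩; exact List.length_eq_zero_iff.mp hl
  | succ n ih =>
    intro p
    simp only [PF, Finset.mem_biUnion, Finset.mem_image]
    constructor
    · rintro ⟨q, hq, s, hs, rfl⟩
      obtain ⟨hlen, hval⟩ := (ih q).mp hq
      refine ⟨by simp [hlen], ?_⟩
      rw [gValid_append]
      refine ⟨hval, ?_⟩
      obtain ⟨bb, l⟩ := s
      cases bb with
      | true =>
        rcases mem_extF.mp hs with ⟨h1, h2⟩ | ⟨h1, h2⟩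
        · have h2' : l < finalHeight q 0 + b + 1 := h2
          exact ⟨by omega, trivial⟩
        · simp at h1
      | false =>
        rcases mem_extF.mp hs with ⟨h1, h2⟩ | ⟨h1, h2⟩
        · simp at h1
        · have h2' : l < finalHeight q 0 := h2
          exact ⟨by omega, by omega, trivial⟩
    · rintro ⟨hlen, hval⟩
      have hne : p ≠ [] := by intro h; subst h; simp at hlen
      have hdec := List.dropLast_append_getLast hne
      have hsplit := gValid_append b p.dropLast [p.getLast hne] 0
      rw [hdec] at hsplit
      have h2 := (hsplit.mp hval).2
      refine ⟨p.dropLast, ?_, p.getLast hne, ?_, hdec⟩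
      · exact (ih _).mpr ⟨by simp [hlen], (hsplit.mp hval).1⟩
      · exact single_mem h2


lemma qD_add (p q : Polynomial (Polynomial ℤ)) : qD (p + q) = qD p + qD q := by
  unfold qD
  apply Polynomial.sum_add_index <;> intros <;> simp [add_mul]

lemma qD_monomial (m : ℕ) (c : Polynomial ℤ) :
    qD (C c * X ^ m) = C (c * qnat m) * X ^ (m - 1) := by
  rw [C_mul_X_pow_eq_monomial]
  unfold qD
  rw [Polynomial.sum_monomial_index]
  simp

lemma qnat_zero : qnat 0 = 0 := by simp [qnat]

lemma qnat_split (k m : ℕ) : qnat (k + m) = qnat k + X ^ k * qnat m := by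
  unfold qnat
  rw [Finset.sum_range_add, Finset.mul_sum]
  congr 1
  exact Finset.sum_congr rfl fun i _ => by rw [pow_add]

noncomputable def opT (b : ℕ) (p : Polynomial (Polynomial ℤ)) : Polynomial (Polynomial ℤ) :=
  (1 + C ((X : Polynomial ℤ) ^ (b + 1)) * X ^ 2) * qD p + C (qnat (b + 1)) * X * p

lemma opT_monomial (b h : ℕ) (c : Polynomial ℤ) :
    opT b (C c * X ^ h) =
      C (c * qnat (h + b + 1)) * X ^ (h + 1) + C (c * qnat h) * X ^ (h - 1) := by
  unfold opT
  rw [qD_monomial]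
  cases h with
  | zero =>
    simp only [qnat_zero, mul_zero, map_zero, zero_mul, add_zero, Nat.zero_add, pow_zero,
      mul_one, pow_one, Nat.zero_sub]
    rw [map_mul]; ring
  | succ h' =>
    have hq : qnat (h' + 1 + b + 1) = qnat (b + 1) + X ^ (b + 1) * qnat (h' + 1) := by
      rw [show h' + 1 + b + 1 = (b + 1) + (h' + 1) from by omega, qnat_split]
    rw [hq, Nat.succ_sub_one]
    simp only [map_add, map_mul, mul_add]
    ring

lemma opT_sum {s : Finset (List (Bool × ℕ))} (b : ℕ)
    (f : List (Bool × ℕ) → Polynomial (Polynomial ℤ)) :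
    opT b (∑ p ∈ s, f p) = ∑ p ∈ s, opT b (f p) := by
  unfold opT
  have hqd : qD (∑ p ∈ s, f p) = ∑ p ∈ s, qD (f p) := by
    classical
    induction s using Finset.induction with
    | empty => simp [qD]
    | insert _ _ h ih => rw [Finset.sum_insert h, Finset.sum_insert h, qD_add, ih]
  rw [hqd, Finset.mul_sum, Finset.mul_sum, ← Finset.sum_add_distrib]

noncomputable def wt (p : List (Bool × ℕ)) : Polynomial (Polynomial ℤ) :=
  (X : Polynomial (Polynomial ℤ)) ^ finalHeight p 0 *
    C ((X : Polynomial ℤ) ^ (p.map Prod.snd).sum)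

lemma wt_append_up (p : List (Bool × ℕ)) (l : ℕ) :
    wt (p ++ [(true, l)]) =
      X ^ (finalHeight p 0 + 1) * C ((X : Polynomial ℤ) ^ ((p.map Prod.snd).sum + l)) := by
  unfold wt
  rw [finalHeight_append]
  simp [finalHeight]

lemma wt_append_down (p : List (Bool × ℕ)) (l : ℕ) :
    wt (p ++ [(false, l)]) =
      X ^ (finalHeight p 0 - 1) * C ((X : Polynomial ℤ) ^ ((p.map Prod.snd).sum + l)) := by
  unfold wt
  rw [finalHeight_append]
  simp [finalHeight]

lemma sum_mono (k w m : ℕ) :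
    ∑ l ∈ Finset.range m, (X : Polynomial (Polynomial ℤ)) ^ k * C ((X : Polynomial ℤ) ^ (w + l))
      = C ((X : Polynomial ℤ) ^ w * qnat m) * X ^ k := by
  rw [← Finset.mul_sum, ← map_sum, mul_comm]
  congr 2
  rw [qnat, Finset.mul_sum]
  exact Finset.sum_congr rfl fun l _ => by rw [pow_add]

lemma extF_disj (b h : ℕ) :
    Disjoint ((Finset.range (h + b + 1)).image fun l => ((true : Bool), l))
      ((Finset.range h).image fun l => ((false : Bool), l)) := by
  rw [Finset.disjoint_left]
  rintro ⟨bb, l⟩ hx hy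
  simp only [Finset.mem_image, Finset.mem_range, Prod.mk.injEq] at hx hy
  obtain ⟨a, _, ha, _⟩ := hx
  obtain ⟨a', _, ha', _⟩ := hy
  rw [← ha] at ha'; exact Bool.noConfusion ha'

lemma opT_wt (b : ℕ) (p : List (Bool × ℕ)) :
    opT b (wt p) = ∑ s ∈ extF b (finalHeight p 0), wt (p ++ [s]) := by
  have hwt : wt p
      = C ((X : Polynomial ℤ) ^ (p.map Prod.snd).sum) * X ^ finalHeight p 0 := mul_comm _ _
  rw [hwt, opT_monomial, extF, Finset.sum_union (extF_disj b (finalHeight p 0)),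
    Finset.sum_image (by simp), Finset.sum_image (by simp),
    Finset.sum_congr rfl fun l _ => wt_append_up p l,
    Finset.sum_congr rfl fun l _ => wt_append_down p l,
    sum_mono, sum_mono]

lemma sum_PF_succ (b n : ℕ) (g : List (Bool × ℕ) → Polynomial (Polynomial ℤ)) :
    ∑ p ∈ PF b (n + 1), g p
      = ∑ p ∈ PF b n, ∑ s ∈ extF b (finalHeight p 0), g (p ++ [s]) := by
  show ∑ p ∈ (PF b n).biUnion _, g p = _
  rw [Finset.sum_biUnion]
  · exact Finset.sum_congr rfl fun p _ => Finset.sum_image (by simp)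
  · intro p1 h1 p2 h2 hne
    simp only [Function.onFun, Finset.disjoint_left]
    intro q hq1 hq2
    simp only [Finset.mem_image] at hq1 hq2
    obtain ⟨s1, _, rfl⟩ := hq1
    obtain ⟨s2, _, he⟩ := hq2
    exact hne (List.append_inj' he.symm rfl).1

noncomputable def gP (b : ℕ) : ℕ → Polynomial (Polynomial ℤ)
  | 0 => 1
  | n + 1 => opT b (gP b n)

lemma gP_eq (b n : ℕ) : gP b n = ∑ p ∈ PF b n, wt p := by
  induction n with
  | zero => simp [gP, PF, wt, finalHeight]
  | succ n ih =>
    rw [gP, ih, opT_sum, sum_PF_succ]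
    exact Finset.sum_congr rfl fun p _ => opT_wt b p

lemma qnat_one : qnat 1 = 1 := by simp [qnat]

lemma qnat_two : qnat 2 = 1 + X := by
  rw [qnat, Finset.sum_range_succ, Finset.sum_range_one]; simp

lemma qQ (n : ℕ) : qPolyQ n = gP 0 n := by
  induction n with
  | zero => rfl
  | succ n ih => rw [qPolyQ, ih]; show _ = opT 0 _; rw [opT, qnat_one]; simp

lemma qR (n : ℕ) : qPolyR n = gP 1 n := by
  induction n with
  | zero => rfl
  | succ n ih => rw [qPolyR, ih]; show _ = opT 1 _; rw [opT, qnat_two]; simp [map_add]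

theorem stmt15 (n : ℕ) :
    (qPolyQ n = ∑ᶠ p ∈ {p : List (Bool × ℕ) | p.length = n ∧ dpValid' p 0},
      (X : Polynomial (Polynomial ℤ)) ^ finalHeight p 0 *
        C ((X : Polynomial ℤ) ^ (p.map Prod.snd).sum)) ∧
    (qPolyR n = ∑ᶠ p ∈ {p : List (Bool × ℕ) | p.length = n ∧ dpValid p 0},
      (X : Polynomial (Polynomial ℤ)) ^ finalHeight p 0 *
        C ((X : Polynomial ℤ) ^ (p.map Prod.snd).sum)) := by
  constructor
  · have hset : {p : List (Bool × ℕ) | p.length = n ∧ dpValid' p 0} = ↑(PF 0 n) := by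
      ext p; simp [mem_PF, gValid_zero]
    rw [hset, finsum_mem_coe_finset, qQ, gP_eq]
    rfl
  · have hset : {p : List (Bool × ℕ) | p.length = n ∧ dpValid p 0} = ↑(PF 1 n) := by
      ext p; simp [mem_PF, gValid_one]
    rw [hset, finsum_mem_coe_finset, qR, gP_eq]
    rfl
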